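/- For every closed, unlabelled modal μ-calculus formula φ in disjunctive form with distinct bound variables, the block-labelled formula bl(φ, tt, 0, []) is well-formed: (1) all occurrences of a variable carry the same block number; (2) all variables sharing the same block number have the same fix-point sign, with even block numbers assigned exactly to variables whose binder occurs under an even number of negations; (3) for every Xᵏ ∈ bv(bl(φ, tt, 0, [])) and every Y^{k'} free in the binding sub-formula of Xᵏ, k' ≤ k. Moreover, erasing the block labels of bl(φ, tt, 0, []) yields φ. -/

import Mathlib

/-- A labelled transition system: a transition relation and an initial state. -/
structure LTS (σ : Type) (α : Type) where
  trans : σ → α → σ → Prop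
  init : σ

/-- Block-labelled modal μ-calculus formulas in disjunctive form: only `ff`,
disjunction, possibility modalities, minimal fix-points, variables (labelled
with a block number) and negation. -/
inductive DForm (α χ : Type) : Type where
  | ff : DForm α χ
  | or : DForm α χ → DForm α χ → DForm α χ
  | neg : DForm α χ → DForm α χ
  | dia : α → DForm α χ → DForm α χ
  | mu : χ → ℕ → DForm α χ → DForm α χ
  | var : χ → ℕ → DForm α χ

/-- Labels of formula graphs: `∨`, `¬`, `⟨a⟩` and `μᵏ`. -/
inductive FLabel (α : Type) : Type where
  | or : FLabel α
  | neg : FLabel α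
  | dia : α → FLabel α
  | mu : ℕ → FLabel α

/-- The binding sub-formula `φ[X]` of a variable named `X` (the binder `μX^k.ψ₀`),
if any; unique when bound variables are distinct. -/
def findBinder {α χ : Type} [DecidableEq χ] : DForm α χ → χ → Option (DForm α χ)
  | DForm.ff, _ => none
  | DForm.or φ₁ φ₂, X => (findBinder φ₁ X).orElse (fun _ => findBinder φ₂ X)
  | DForm.neg φ₀, X => findBinder φ₀ X
  | DForm.dia _ φ₀, X => findBinder φ₀ X
  | DForm.mu Y k φ₀, X => if Y = X then some (DForm.mu Y k φ₀) else findBinder φ₀ X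
  | DForm.var _ _, _ => none

/-- Free (block-labelled) variables. -/
def dfvD {α χ : Type} : DForm α χ → Set (χ × ℕ)
  | DForm.ff => ∅
  | DForm.or φ₁ φ₂ => dfvD φ₁ ∪ dfvD φ₂
  | DForm.neg φ₀ => dfvD φ₀
  | DForm.dia _ φ₀ => dfvD φ₀
  | DForm.mu X k φ₀ => dfvD φ₀ \ {(X, k)}
  | DForm.var X k => {(X, k)}

/-- Bound (block-labelled) variables. -/
def dbvD {α χ : Type} : DForm α χ → Set (χ × ℕ)
  | DForm.ff => ∅
  | DForm.or φ₁ φ₂ => dbvD φ₁ ∪ dbvD φ₂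
  | DForm.neg φ₀ => dbvD φ₀
  | DForm.dia _ φ₀ => dbvD φ₀
  | DForm.mu X k φ₀ => insert (X, k) (dbvD φ₀)
  | DForm.var _ _ => ∅

/-- The list of all names bound in the formula. -/
def binderNames {α χ : Type} : DForm α χ → List χ
  | DForm.ff => []
  | DForm.or φ₁ φ₂ => binderNames φ₁ ++ binderNames φ₂
  | DForm.neg φ₀ => binderNames φ₀
  | DForm.dia _ φ₀ => binderNames φ₀
  | DForm.mu X _ φ₀ => X :: binderNames φ₀
  | DForm.var _ _ => []

/-- All bound variables have distinct names (and in particular each is bound once). -/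
def DistinctBound {α χ : Type} (φ : DForm α χ) : Prop := (binderNames φ).Nodup

/-- The list of block numbers occurring in the formula. -/
def blockList {α χ : Type} : DForm α χ → List ℕ
  | DForm.ff => []
  | DForm.or φ₁ φ₂ => blockList φ₁ ++ blockList φ₂
  | DForm.neg φ₀ => blockList φ₀
  | DForm.dia _ φ₀ => blockList φ₀
  | DForm.mu _ k φ₀ => k :: blockList φ₀
  | DForm.var _ k => [k]

/-- Disjunction of a list of formulas (`ff` for the empty list, the formula
itself for a singleton). -/
def bigOr {α χ : Type} : List (DForm α χ) → DForm α χ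
  | [] => DForm.ff
  | d :: ds => ds.foldl DForm.or d

/-- `SubNeg φ b ψ`: `ψ` is a sub-formula of `φ`, with `b = true` iff the path from
the root of `φ` to the occurrence of `ψ` traverses an even number of negations. -/
inductive SubNeg {α χ : Type} (φ : DForm α χ) : Bool → DForm α χ → Prop
  | refl : SubNeg φ true φ
  | or_l {b ψ₁ ψ₂} : SubNeg φ b (DForm.or ψ₁ ψ₂) → SubNeg φ b ψ₁
  | or_r {b ψ₁ ψ₂} : SubNeg φ b (DForm.or ψ₁ ψ₂) → SubNeg φ b ψ₂
  | neg {b ψ} : SubNeg φ b (DForm.neg ψ) → SubNeg φ (!b) ψ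
  | dia {b a ψ} : SubNeg φ b (DForm.dia a ψ) → SubNeg φ b ψ
  | mu {b X k ψ} : SubNeg φ b (DForm.mu X k ψ) → SubNeg φ b ψ

/-- Sub-formula relation. -/
def Subf {α χ : Type} (φ ψ : DForm α χ) : Prop := ∃ b, SubNeg φ b ψ

/-- The variable named `X` occurs (bound or free, as binder or as use) with block
number `k` in `φ`. -/
def VarOcc {α χ : Type} (φ : DForm α χ) (X : χ) (k : ℕ) : Prop :=
  Subf φ (DForm.var X k) ∨ ∃ ψ, Subf φ (DForm.mu X k ψ)

/-- Well-formedness of a block-labelling: (1) all occurrences of a variable carry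
the same block number; (2) even block numbers are used exactly for binders
occurring under an even number of negations; (3) block numbers of free variables
of a binding sub-formula do not exceed the block number of the binder. -/
def WFBL {α χ : Type} (φ : DForm α χ) : Prop :=
  (∀ X k k', VarOcc φ X k → VarOcc φ X k' → k = k') ∧
  (∀ (b : Bool) (X : χ) (k : ℕ) (ψ : DForm α χ),
    SubNeg φ b (DForm.mu X k ψ) → (Even k ↔ b = true)) ∧
  (∀ (X : χ) (k : ℕ) (ψ : DForm α χ),
    Subf φ (DForm.mu X k ψ) → ∀ p ∈ dfvD (DForm.mu X k ψ), p.2 ≤ k)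

/-- Transitions of the formula graph `enc(φ)` encoding the formula `φ`. -/
inductive EncTrans {α χ : Type} [DecidableEq χ] (φ : DForm α χ) :
    DForm α χ → FLabel α → DForm α χ → Prop
  | var {X : χ} {k : ℕ} {ψ : DForm α χ} :
      findBinder φ X = some ψ → EncTrans φ (DForm.var X k) FLabel.or ψ
  | neg (ψ : DForm α χ) : EncTrans φ (DForm.neg ψ) FLabel.neg ψ
  | dia (a : α) (ψ : DForm α χ) : EncTrans φ (DForm.dia a ψ) (FLabel.dia a) ψ
  | or_l (ψ₁ ψ₂ : DForm α χ) : EncTrans φ (DForm.or ψ₁ ψ₂) FLabel.or ψ₁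
  | or_r (ψ₁ ψ₂ : DForm α χ) : EncTrans φ (DForm.or ψ₁ ψ₂) FLabel.or ψ₂
  | mu (X : χ) (k : ℕ) (ψ : DForm α χ) :
      EncTrans φ (DForm.mu X k ψ) (FLabel.mu k) ψ

/-- The formula graph encoding `φ`: states are sub-formulas, initial state is `φ`. -/
def encLTS {α χ : Type} [DecidableEq χ] (φ : DForm α χ) : LTS (DForm α χ) (FLabel α) :=
  ⟨EncTrans φ, φ⟩

/-- Unlabelled modal μ-calculus formulas in disjunctive form. -/
inductive UForm (α χ : Type) : Type where
  | ff : UForm α χ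
  | or : UForm α χ → UForm α χ → UForm α χ
  | neg : UForm α χ → UForm α χ
  | dia : α → UForm α χ → UForm α χ
  | mu : χ → UForm α χ → UForm α χ
  | var : χ → UForm α χ

/-- Free variables of an unlabelled formula. -/
def ufv {α χ : Type} : UForm α χ → Set χ
  | UForm.ff => ∅
  | UForm.or φ₁ φ₂ => ufv φ₁ ∪ ufv φ₂
  | UForm.neg φ₀ => ufv φ₀
  | UForm.dia _ φ₀ => ufv φ₀
  | UForm.mu X φ₀ => ufv φ₀ \ {X}
  | UForm.var X => {X}

/-- The list of all names bound in an unlabelled formula. -/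
def ubinderNames {α χ : Type} : UForm α χ → List χ
  | UForm.ff => []
  | UForm.or φ₁ φ₂ => ubinderNames φ₁ ++ ubinderNames φ₂
  | UForm.neg φ₀ => ubinderNames φ₀
  | UForm.dia _ φ₀ => ubinderNames φ₀
  | UForm.mu X φ₀ => X :: ubinderNames φ₀
  | UForm.var _ => []

/-- The block-labelling function `bl(ψ, b, k, γ)`. -/
def bl {α χ : Type} [DecidableEq χ] : UForm α χ → Bool → ℕ → (χ → ℕ) → DForm α χ
  | UForm.ff, _, _, _ => DForm.ff
  | UForm.var X, _, _, γ => DForm.var X (γ X)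
  | UForm.neg φ₀, b, k, γ => DForm.neg (bl φ₀ (!b) k γ)
  | UForm.or φ₁ φ₂, b, k, γ => DForm.or (bl φ₁ b k γ) (bl φ₂ b k γ)
  | UForm.dia a φ₀, b, k, γ => DForm.dia a (bl φ₀ b k γ)
  | UForm.mu X φ₀, b, k, γ =>
    if b then DForm.mu X k (bl φ₀ true k (Function.update γ X k))
    else DForm.mu X (k + 1) (bl φ₀ true (k + 1) (Function.update γ X (k + 1)))

/-- Erasing the block labels of a block-labelled formula. -/
def eraseD {α χ : Type} : DForm α χ → UForm α χ
  | DForm.ff => UForm.ff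
  | DForm.or φ₁ φ₂ => UForm.or (eraseD φ₁) (eraseD φ₂)
  | DForm.neg φ₀ => UForm.neg (eraseD φ₀)
  | DForm.dia a φ₀ => UForm.dia a (eraseD φ₀)
  | DForm.mu X _ φ₀ => UForm.mu X (eraseD φ₀)
  | DForm.var X _ => UForm.var X

set_option linter.unusedSectionVars false
section BLAux

variable {α χ : Type} [DecidableEq χ]

lemma subneg_ff_inv {b : Bool} {ψ : DForm α χ}
    (h : SubNeg (DForm.ff : DForm α χ) b ψ) : b = true ∧ ψ = DForm.ff := by
  induction h with
  | refl => exact ⟨rfl, rfl⟩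
  | or_l _ ih => simp at ih
  | or_r _ ih => simp at ih
  | neg _ ih => simp at ih
  | dia _ ih => simp at ih
  | mu _ ih => simp at ih

lemma subneg_var_inv {Y : χ} {m : ℕ} {b : Bool} {ψ : DForm α χ}
    (h : SubNeg (DForm.var Y m : DForm α χ) b ψ) : b = true ∧ ψ = DForm.var Y m := by
  induction h with
  | refl => exact ⟨rfl, rfl⟩
  | or_l _ ih => simp at ih
  | or_r _ ih => simp at ih
  | neg _ ih => simp at ih
  | dia _ ih => simp at ih
  | mu _ ih => simp at ih

lemma subneg_or_inv {T₁ T₂ : DForm α χ} {b : Bool} {ψ : DForm α χ}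
    (h : SubNeg (DForm.or T₁ T₂) b ψ) :
    (b = true ∧ ψ = DForm.or T₁ T₂) ∨ SubNeg T₁ b ψ ∨ SubNeg T₂ b ψ := by
  induction h with
  | refl => exact Or.inl ⟨rfl, rfl⟩
  | @or_l b ψ₁ ψ₂ _ ih =>
    rcases ih with ⟨hb, he⟩ | h1 | h2
    · obtain ⟨rfl, rfl⟩ : ψ₁ = T₁ ∧ ψ₂ = T₂ := by
        injection he with h1 h2; exact ⟨h1, h2⟩
      subst hb; exact Or.inr (Or.inl SubNeg.refl)
    · exact Or.inr (Or.inl h1.or_l)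
    · exact Or.inr (Or.inr h2.or_l)
  | @or_r b ψ₁ ψ₂ _ ih =>
    rcases ih with ⟨hb, he⟩ | h1 | h2
    · obtain ⟨rfl, rfl⟩ : ψ₁ = T₁ ∧ ψ₂ = T₂ := by
        injection he with h1 h2; exact ⟨h1, h2⟩
      subst hb; exact Or.inr (Or.inr SubNeg.refl)
    · exact Or.inr (Or.inl h1.or_r)
    · exact Or.inr (Or.inr h2.or_r)
  | neg _ ih =>
    rcases ih with ⟨hb, he⟩ | h1 | h2
    · simp at he
    · exact Or.inr (Or.inl h1.neg)
    · exact Or.inr (Or.inr h2.neg)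
  | dia _ ih =>
    rcases ih with ⟨hb, he⟩ | h1 | h2
    · simp at he
    · exact Or.inr (Or.inl h1.dia)
    · exact Or.inr (Or.inr h2.dia)
  | mu _ ih =>
    rcases ih with ⟨hb, he⟩ | h1 | h2
    · simp at he
    · exact Or.inr (Or.inl h1.mu)
    · exact Or.inr (Or.inr h2.mu)

lemma subneg_neg_inv {T : DForm α χ} {b : Bool} {ψ : DForm α χ}
    (h : SubNeg (DForm.neg T) b ψ) :
    (b = true ∧ ψ = DForm.neg T) ∨ SubNeg T (!b) ψ := by
  induction h with
  | refl => exact Or.inl ⟨rfl, rfl⟩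
  | or_l _ ih =>
    rcases ih with ⟨hb, he⟩ | h1
    · simp at he
    · exact Or.inr h1.or_l
  | or_r _ ih =>
    rcases ih with ⟨hb, he⟩ | h1
    · simp at he
    · exact Or.inr h1.or_r
  | @neg b ψ₀ _ ih =>
    rcases ih with ⟨hb, he⟩ | h1
    · obtain rfl : ψ₀ = T := by injection he
      subst hb; exact Or.inr SubNeg.refl
    · exact Or.inr h1.neg
  | dia _ ih =>
    rcases ih with ⟨hb, he⟩ | h1
    · simp at he
    · exact Or.inr h1.dia
  | mu _ ih =>
    rcases ih with ⟨hb, he⟩ | h1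
    · simp at he
    · exact Or.inr h1.mu

lemma subneg_dia_inv {a : α} {T : DForm α χ} {b : Bool} {ψ : DForm α χ}
    (h : SubNeg (DForm.dia a T) b ψ) :
    (b = true ∧ ψ = DForm.dia a T) ∨ SubNeg T b ψ := by
  induction h with
  | refl => exact Or.inl ⟨rfl, rfl⟩
  | or_l _ ih =>
    rcases ih with ⟨hb, he⟩ | h1
    · simp at he
    · exact Or.inr h1.or_l
  | or_r _ ih =>
    rcases ih with ⟨hb, he⟩ | h1
    · simp at he
    · exact Or.inr h1.or_r
  | neg _ ih =>
    rcases ih with ⟨hb, he⟩ | h1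
    · simp at he
    · exact Or.inr h1.neg
  | @dia b a' ψ₀ _ ih =>
    rcases ih with ⟨hb, he⟩ | h1
    · obtain ⟨rfl, rfl⟩ : a' = a ∧ ψ₀ = T := by
        injection he with h1 h2; exact ⟨h1, h2⟩
      subst hb; exact Or.inr SubNeg.refl
    · exact Or.inr h1.dia
  | mu _ ih =>
    rcases ih with ⟨hb, he⟩ | h1
    · simp at he
    · exact Or.inr h1.mu

lemma subneg_mu_inv {Y : χ} {m : ℕ} {T : DForm α χ} {b : Bool} {ψ : DForm α χ}
    (h : SubNeg (DForm.mu Y m T) b ψ) :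
    (b = true ∧ ψ = DForm.mu Y m T) ∨ SubNeg T b ψ := by
  induction h with
  | refl => exact Or.inl ⟨rfl, rfl⟩
  | or_l _ ih =>
    rcases ih with ⟨hb, he⟩ | h1
    · simp at he
    · exact Or.inr h1.or_l
  | or_r _ ih =>
    rcases ih with ⟨hb, he⟩ | h1
    · simp at he
    · exact Or.inr h1.or_r
  | neg _ ih =>
    rcases ih with ⟨hb, he⟩ | h1
    · simp at he
    · exact Or.inr h1.neg
  | dia _ ih =>
    rcases ih with ⟨hb, he⟩ | h1
    · simp at he
    · exact Or.inr h1.dia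
  | @mu b X k ψ₀ _ ih =>
    rcases ih with ⟨hb, he⟩ | h1
    · obtain ⟨rfl, rfl, rfl⟩ : X = Y ∧ k = m ∧ ψ₀ = T := by
        injection he with h1 h2 h3; exact ⟨h1, h2, h3⟩
      subst hb; exact Or.inr SubNeg.refl
    · exact Or.inr h1.mu

lemma varOcc_ff_elim {X : χ} {k : ℕ} (h : VarOcc (DForm.ff : DForm α χ) X k) : False := by
  rcases h with ⟨b, hs⟩ | ⟨ρ, b, hs⟩
  · simpa using (subneg_ff_inv hs).2
  · simpa using (subneg_ff_inv hs).2

lemma varOcc_var_elim {Y : χ} {m : ℕ} {X : χ} {k : ℕ}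
    (h : VarOcc (DForm.var Y m : DForm α χ) X k) : X = Y ∧ k = m := by
  rcases h with ⟨b, hs⟩ | ⟨ρ, b, hs⟩
  · have := (subneg_var_inv hs).2
    injection this with h1 h2; exact ⟨h1, h2⟩
  · simpa using (subneg_var_inv hs).2

lemma varOcc_or_elim {T₁ T₂ : DForm α χ} {X : χ} {k : ℕ}
    (h : VarOcc (DForm.or T₁ T₂) X k) : VarOcc T₁ X k ∨ VarOcc T₂ X k := by
  rcases h with ⟨b, hs⟩ | ⟨ρ, b, hs⟩
  · rcases subneg_or_inv hs with ⟨_, he⟩ | h1 | h2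
    · simp at he
    · exact Or.inl (Or.inl ⟨b, h1⟩)
    · exact Or.inr (Or.inl ⟨b, h2⟩)
  · rcases subneg_or_inv hs with ⟨_, he⟩ | h1 | h2
    · simp at he
    · exact Or.inl (Or.inr ⟨ρ, b, h1⟩)
    · exact Or.inr (Or.inr ⟨ρ, b, h2⟩)

lemma varOcc_neg_elim {T : DForm α χ} {X : χ} {k : ℕ}
    (h : VarOcc (DForm.neg T) X k) : VarOcc T X k := by
  rcases h with ⟨b, hs⟩ | ⟨ρ, b, hs⟩
  · rcases subneg_neg_inv hs with ⟨_, he⟩ | h1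
    · simp at he
    · exact Or.inl ⟨!b, h1⟩
  · rcases subneg_neg_inv hs with ⟨_, he⟩ | h1
    · simp at he
    · exact Or.inr ⟨ρ, !b, h1⟩

lemma varOcc_dia_elim {a : α} {T : DForm α χ} {X : χ} {k : ℕ}
    (h : VarOcc (DForm.dia a T) X k) : VarOcc T X k := by
  rcases h with ⟨b, hs⟩ | ⟨ρ, b, hs⟩
  · rcases subneg_dia_inv hs with ⟨_, he⟩ | h1
    · simp at he
    · exact Or.inl ⟨b, h1⟩
  · rcases subneg_dia_inv hs with ⟨_, he⟩ | h1
    · simp at he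
    · exact Or.inr ⟨ρ, b, h1⟩

lemma varOcc_mu_elim {Y : χ} {m : ℕ} {T : DForm α χ} {X : χ} {k : ℕ}
    (h : VarOcc (DForm.mu Y m T) X k) : (X = Y ∧ k = m) ∨ VarOcc T X k := by
  rcases h with ⟨b, hs⟩ | ⟨ρ, b, hs⟩
  · rcases subneg_mu_inv hs with ⟨_, he⟩ | h1
    · simp at he
    · exact Or.inr (Or.inl ⟨b, h1⟩)
  · rcases subneg_mu_inv hs with ⟨_, he⟩ | h1
    · injection he with h1 h2 _; exact Or.inl ⟨h1, h2⟩
    · exact Or.inr (Or.inr ⟨ρ, b, h1⟩)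

end BLAux

section BLMain

variable {α χ : Type} [DecidableEq χ]

lemma bl_occ (ψ : UForm α χ) : ∀ (b : Bool) (k : ℕ) (γ : χ → ℕ) (X : χ) (j : ℕ),
    VarOcc (bl ψ b k γ) X j →
    (X ∈ ufv ψ ∨ X ∈ ubinderNames ψ) ∧
      (X ∈ ufv ψ → X ∉ ubinderNames ψ → j = γ X) := by
  induction ψ with
  | ff =>
    intro b k γ X j h
    exact (varOcc_ff_elim (by simpa [bl] using h)).elim
  | var Y =>
    intro b k γ X j h
    obtain ⟨rfl, rfl⟩ := varOcc_var_elim (by simpa [bl] using h)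
    exact ⟨Or.inl (by simp [ufv]), fun _ _ => rfl⟩
  | or ψ₁ ψ₂ ih₁ ih₂ =>
    intro b k γ X j h
    rcases varOcc_or_elim (by simpa [bl] using h) with h1 | h2
    · obtain ⟨hw, hs⟩ := ih₁ b k γ X j h1
      constructor
      · rcases hw with h | h
        · exact Or.inl (by simp [ufv]; exact Or.inl h)
        · exact Or.inr (by simp [ubinderNames]; exact Or.inl h)
      · intro hf hb
        have hb1 : X ∉ ubinderNames ψ₁ := fun hx =>
          hb (by simp [ubinderNames]; exact Or.inl hx)
        rcases hw with h | h
        · exact hs h hb1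
        · exact absurd h hb1
    · obtain ⟨hw, hs⟩ := ih₂ b k γ X j h2
      constructor
      · rcases hw with h | h
        · exact Or.inl (by simp [ufv]; exact Or.inr h)
        · exact Or.inr (by simp [ubinderNames]; exact Or.inr h)
      · intro hf hb
        have hb2 : X ∉ ubinderNames ψ₂ := fun hx =>
          hb (by simp [ubinderNames]; exact Or.inr hx)
        rcases hw with h | h
        · exact hs h hb2
        · exact absurd h hb2
  | neg ψ₀ ih =>
    intro b k γ X j h
    exact ih (!b) k γ X j (varOcc_neg_elim (by simpa [bl] using h))
  | dia a ψ₀ ih =>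
    intro b k γ X j h
    exact ih b k γ X j (varOcc_dia_elim (by simpa [bl] using h))
  | mu Y ψ₀ ih =>
    intro b k γ X j h
    have key : ∀ K : ℕ,
        VarOcc (DForm.mu Y K (bl ψ₀ true K (Function.update γ Y K))) X j →
        (X ∈ ufv (UForm.mu Y ψ₀) ∨ X ∈ ubinderNames (UForm.mu Y ψ₀)) ∧
          (X ∈ ufv (UForm.mu Y ψ₀) → X ∉ ubinderNames (UForm.mu Y ψ₀) → j = γ X) := by
      intro K hK
      rcases varOcc_mu_elim hK with ⟨rfl, _⟩ | hocc
      · refine ⟨Or.inr (by simp [ubinderNames]), ?_⟩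
        intro hf _
        simp [ufv] at hf
      · obtain ⟨hw, hs⟩ := ih true K (Function.update γ Y K) X j hocc
        constructor
        · by_cases hXY : X = Y
          · exact Or.inr (by simp [ubinderNames, hXY])
          · rcases hw with h | h
            · exact Or.inl (by simp [ufv]; exact ⟨h, hXY⟩)
            · exact Or.inr (by simp [ubinderNames]; exact Or.inr h)
        · intro hf hb
          simp [ufv] at hf
          simp [ubinderNames] at hb
          rw [hs hf.1 hb.2, Function.update_apply, if_neg hf.2]
    cases b
    · exact key (k+1) (by simpa [bl] using h)
    · exact key k (by simpa [bl] using h)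

lemma bl_unique (ψ : UForm α χ) : ∀ (b : Bool) (k : ℕ) (γ : χ → ℕ),
    (ubinderNames ψ).Nodup → (∀ X ∈ ufv ψ, X ∉ ubinderNames ψ) →
    ∀ X j j', VarOcc (bl ψ b k γ) X j → VarOcc (bl ψ b k γ) X j' → j = j' := by
  induction ψ with
  | ff =>
    intro b k γ _ _ X j j' h _
    exact (varOcc_ff_elim (by simpa [bl] using h)).elim
  | var Y =>
    intro b k γ _ _ X j j' h h'
    obtain ⟨_, rfl⟩ := varOcc_var_elim (by simpa [bl] using h)
    obtain ⟨_, rfl⟩ := varOcc_var_elim (by simpa [bl] using h')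
    rfl
  | or ψ₁ ψ₂ ih₁ ih₂ =>
    intro b k γ hnd hdisj X j j' h h'
    rw [ubinderNames, List.nodup_append] at hnd
    obtain ⟨hnd₁, hnd₂, hdj⟩ := hnd
    have hdisj₁ : ∀ X ∈ ufv ψ₁, X ∉ ubinderNames ψ₁ := fun X hX hb =>
      hdisj X (by simp [ufv]; exact Or.inl hX) (by simp [ubinderNames]; exact Or.inl hb)
    have hdisj₂ : ∀ X ∈ ufv ψ₂, X ∉ ubinderNames ψ₂ := fun X hX hb =>
      hdisj X (by simp [ufv]; exact Or.inr hX) (by simp [ubinderNames]; exact Or.inr hb)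
    -- cross-case helper
    have cross : ∀ j j', VarOcc (bl ψ₁ b k γ) X j → VarOcc (bl ψ₂ b k γ) X j' → j = j' := by
      intro j j' h1 h2
      obtain ⟨hw1, hs1⟩ := bl_occ ψ₁ b k γ X j h1
      obtain ⟨hw2, hs2⟩ := bl_occ ψ₂ b k γ X j' h2
      have hX1 : X ∈ ufv ψ₁ := by
        rcases hw1 with h | h
        · exact h
        · exfalso
          rcases hw2 with h2' | h2'
          · exact hdisj X (by simp [ufv]; exact Or.inr h2')
              (by simp [ubinderNames]; exact Or.inl h)
          · exact hdj X h X h2' rfl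
      have hX2 : X ∈ ufv ψ₂ := by
        rcases hw2 with h2' | h2'
        · exact h2'
        · exact absurd h2' (fun hx =>
            hdisj X (by simp [ufv]; exact Or.inl hX1)
              (by simp [ubinderNames]; exact Or.inr hx))
      have hb1 : X ∉ ubinderNames ψ₁ := fun hx =>
        hdisj X (by simp [ufv]; exact Or.inl hX1) (by simp [ubinderNames]; exact Or.inl hx)
      have hb2 : X ∉ ubinderNames ψ₂ := fun hx =>
        hdisj X (by simp [ufv]; exact Or.inl hX1) (by simp [ubinderNames]; exact Or.inr hx)
      rw [hs1 hX1 hb1, hs2 hX2 hb2]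
    rcases varOcc_or_elim (by simpa [bl] using h) with h1 | h1 <;>
      rcases varOcc_or_elim (by simpa [bl] using h') with h2 | h2
    · exact ih₁ b k γ hnd₁ hdisj₁ X j j' h1 h2
    · exact cross j j' h1 h2
    · exact (cross j' j h2 h1).symm
    · exact ih₂ b k γ hnd₂ hdisj₂ X j j' h1 h2
  | neg ψ₀ ih =>
    intro b k γ hnd hdisj X j j' h h'
    exact ih (!b) k γ hnd hdisj X j j'
      (varOcc_neg_elim (by simpa [bl] using h))
      (varOcc_neg_elim (by simpa [bl] using h'))
  | dia a ψ₀ ih =>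
    intro b k γ hnd hdisj X j j' h h'
    exact ih b k γ hnd hdisj X j j'
      (varOcc_dia_elim (by simpa [bl] using h))
      (varOcc_dia_elim (by simpa [bl] using h'))
  | mu Y ψ₀ ih =>
    intro b k γ hnd hdisj X j j' h h'
    rw [ubinderNames, List.nodup_cons] at hnd
    obtain ⟨hYnb, hnd₀⟩ := hnd
    have hdisj₀ : ∀ X ∈ ufv ψ₀, X ∉ ubinderNames ψ₀ := by
      intro Z hZ hb
      by_cases hZY : Z = Y
      · exact hYnb (hZY ▸ hb)
      · exact hdisj Z (by simp [ufv]; exact ⟨hZ, hZY⟩)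
          (by simp [ubinderNames]; exact Or.inr hb)
    have key : ∀ K : ℕ,
        VarOcc (DForm.mu Y K (bl ψ₀ true K (Function.update γ Y K))) X j →
        VarOcc (DForm.mu Y K (bl ψ₀ true K (Function.update γ Y K))) X j' →
        j = j' := by
      intro K hK hK'
      have bound : ∀ i, VarOcc (bl ψ₀ true K (Function.update γ Y K)) Y i → i = K := by
        intro i hi
        obtain ⟨hw, hs⟩ := bl_occ ψ₀ true K (Function.update γ Y K) Y i hi
        rcases hw with hfv | hbv
        · rw [hs hfv hYnb, Function.update_apply, if_pos rfl]
        · exact absurd hbv hYnb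
      rcases varOcc_mu_elim hK with ⟨hx1, hj1⟩ | h1
      · rcases varOcc_mu_elim hK' with ⟨hx2, hj2⟩ | h2
        · rw [hj1, hj2]
        · rw [hj1]; exact (bound j' (hx1 ▸ h2)).symm
      · rcases varOcc_mu_elim hK' with ⟨hx2, hj2⟩ | h2
        · rw [hj2]; exact bound j (hx2 ▸ h1)
        · exact ih true K (Function.update γ Y K) hnd₀ hdisj₀ X j j' h1 h2
    cases b
    · exact key (k+1) (by simpa [bl] using h) (by simpa [bl] using h')
    · exact key k (by simpa [bl] using h) (by simpa [bl] using h')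

end BLMain

section BLMain2

variable {α χ : Type} [DecidableEq χ]

lemma bl_parity (ψ : UForm α χ) : ∀ (b : Bool) (k : ℕ) (γ : χ → ℕ) (s : Bool),
    (Even k ↔ b = s) → ∀ (b' : Bool) (X : χ) (m : ℕ) (ρ : DForm α χ),
    SubNeg (bl ψ b k γ) b' (DForm.mu X m ρ) → (Even m ↔ b' = s) := by
  induction ψ with
  | ff =>
    intro b k γ s hk b' X m ρ h
    have := (subneg_ff_inv (by simpa [bl] using h)).2
    simp at this
  | var Y =>
    intro b k γ s hk b' X m ρ h
    have := (subneg_var_inv (by simpa [bl] using h)).2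
    simp at this
  | or ψ₁ ψ₂ ih₁ ih₂ =>
    intro b k γ s hk b' X m ρ h
    rcases subneg_or_inv (by simpa [bl] using h : SubNeg (DForm.or (bl ψ₁ b k γ) (bl ψ₂ b k γ)) b' (DForm.mu X m ρ)) with ⟨_, he⟩ | h1 | h2
    · simp at he
    · exact ih₁ b k γ s hk b' X m ρ h1
    · exact ih₂ b k γ s hk b' X m ρ h2
  | neg ψ₀ ih =>
    intro b k γ s hk b' X m ρ h
    rcases subneg_neg_inv (by simpa [bl] using h : SubNeg (DForm.neg (bl ψ₀ (!b) k γ)) b' (DForm.mu X m ρ)) with ⟨_, he⟩ | h0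
    · simp at he
    · have := ih (!b) k γ (!s) (by cases b <;> cases s <;> simp_all) (!b') X m ρ h0
      cases b' <;> cases s <;> simp_all
  | dia a ψ₀ ih =>
    intro b k γ s hk b' X m ρ h
    rcases subneg_dia_inv (by simpa [bl] using h : SubNeg (DForm.dia a (bl ψ₀ b k γ)) b' (DForm.mu X m ρ)) with ⟨_, he⟩ | h0
    · simp at he
    · exact ih b k γ s hk b' X m ρ h0
  | mu Y ψ₀ ih =>
    intro b k γ s hk b' X m ρ h
    have key : ∀ K : ℕ, (Even K ↔ true = s) →
        SubNeg (DForm.mu Y K (bl ψ₀ true K (Function.update γ Y K))) b' (DForm.mu X m ρ) →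
        (Even m ↔ b' = s) := by
      intro K hK hsub
      rcases subneg_mu_inv hsub with ⟨hb, he⟩ | h0
      · rw [DForm.mu.injEq] at he
        subst hb
        rw [he.2.1]; exact hK
      · exact ih true K (Function.update γ Y K) s hK b' X m ρ h0
    cases b
    · refine key (k+1) ?_ (by simpa [bl] using h)
      rw [Nat.even_add_one]
      cases s <;> simp_all
    · exact key k (by simpa using hk) (by simpa [bl] using h)

lemma bl_fv (ψ : UForm α χ) : ∀ (b : Bool) (k : ℕ) (γ : χ → ℕ) (p : χ × ℕ),
    p ∈ dfvD (bl ψ b k γ) → p.1 ∈ ufv ψ ∧ p.2 = γ p.1 := by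
  induction ψ with
  | ff => intro b k γ p hp; simp [bl, dfvD] at hp
  | var Y =>
    intro b k γ p hp
    simp [bl, dfvD] at hp
    subst hp
    exact ⟨by simp [ufv], rfl⟩
  | or ψ₁ ψ₂ ih₁ ih₂ =>
    intro b k γ p hp
    simp only [bl, dfvD, Set.mem_union] at hp
    rcases hp with hp | hp
    · obtain ⟨h1, h2⟩ := ih₁ b k γ p hp
      exact ⟨by simp [ufv]; exact Or.inl h1, h2⟩
    · obtain ⟨h1, h2⟩ := ih₂ b k γ p hp
      exact ⟨by simp [ufv]; exact Or.inr h1, h2⟩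
  | neg ψ₀ ih =>
    intro b k γ p hp
    exact ih (!b) k γ p (by simpa [bl, dfvD] using hp)
  | dia a ψ₀ ih =>
    intro b k γ p hp
    exact ih b k γ p (by simpa [bl, dfvD] using hp)
  | mu Y ψ₀ ih =>
    intro b k γ p hp
    have key : ∀ K : ℕ,
        p ∈ dfvD (DForm.mu Y K (bl ψ₀ true K (Function.update γ Y K))) →
        p.1 ∈ ufv (UForm.mu Y ψ₀) ∧ p.2 = γ p.1 := by
      intro K hp
      simp only [dfvD, Set.mem_diff, Set.mem_singleton_iff] at hp
      obtain ⟨hp1, hp2⟩ := hp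
      obtain ⟨h1, h2⟩ := ih true K (Function.update γ Y K) p hp1
      have hne : p.1 ≠ Y := by
        intro hE
        apply hp2
        have hpk : p.2 = K := by rw [h2, hE, Function.update_apply, if_pos rfl]
        rw [← hE, ← hpk]
      refine ⟨by simp [ufv]; exact ⟨h1, hne⟩, ?_⟩
      rw [h2, Function.update_apply, if_neg hne]
    cases b
    · exact key (k+1) (by simpa [bl] using hp)
    · exact key k (by simpa [bl] using hp)

lemma bl_fv_le (ψ : UForm α χ) : ∀ (b : Bool) (k : ℕ) (γ : χ → ℕ),
    (∀ Y ∈ ufv ψ, γ Y ≤ k) → ∀ (b' : Bool) (X : χ) (m : ℕ) (ρ : DForm α χ),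
    SubNeg (bl ψ b k γ) b' (DForm.mu X m ρ) →
    ∀ p ∈ dfvD (DForm.mu X m ρ), p.2 ≤ m := by
  induction ψ with
  | ff =>
    intro b k γ hγ b' X m ρ h
    have := (subneg_ff_inv (by simpa [bl] using h)).2
    simp at this
  | var Y =>
    intro b k γ hγ b' X m ρ h
    have := (subneg_var_inv (by simpa [bl] using h)).2
    simp at this
  | or ψ₁ ψ₂ ih₁ ih₂ =>
    intro b k γ hγ b' X m ρ h
    have hγ₁ : ∀ Y ∈ ufv ψ₁, γ Y ≤ k := fun Y hY => hγ Y (by simp [ufv]; exact Or.inl hY)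
    have hγ₂ : ∀ Y ∈ ufv ψ₂, γ Y ≤ k := fun Y hY => hγ Y (by simp [ufv]; exact Or.inr hY)
    rcases subneg_or_inv (by simpa [bl] using h : SubNeg (DForm.or (bl ψ₁ b k γ) (bl ψ₂ b k γ)) b' (DForm.mu X m ρ)) with ⟨_, he⟩ | h1 | h2
    · simp at he
    · exact ih₁ b k γ hγ₁ b' X m ρ h1
    · exact ih₂ b k γ hγ₂ b' X m ρ h2
  | neg ψ₀ ih =>
    intro b k γ hγ b' X m ρ h
    rcases subneg_neg_inv (by simpa [bl] using h : SubNeg (DForm.neg (bl ψ₀ (!b) k γ)) b' (DForm.mu X m ρ)) with ⟨_, he⟩ | h0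
    · simp at he
    · exact ih (!b) k γ (fun Y hY => hγ Y (by simpa [ufv] using hY)) (!b') X m ρ h0
  | dia a ψ₀ ih =>
    intro b k γ hγ b' X m ρ h
    rcases subneg_dia_inv (by simpa [bl] using h : SubNeg (DForm.dia a (bl ψ₀ b k γ)) b' (DForm.mu X m ρ)) with ⟨_, he⟩ | h0
    · simp at he
    · exact ih b k γ (fun Y hY => hγ Y (by simpa [ufv] using hY)) b' X m ρ h0
  | mu Y ψ₀ ih =>
    intro b k γ hγ b' X m ρ h
    have key : ∀ K : ℕ, k ≤ K →
        SubNeg (DForm.mu Y K (bl ψ₀ true K (Function.update γ Y K))) b' (DForm.mu X m ρ) →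
        ∀ p ∈ dfvD (DForm.mu X m ρ), p.2 ≤ m := by
      intro K hkK hsub
      have hγ' : ∀ Z ∈ ufv ψ₀, Function.update γ Y K Z ≤ K := by
        intro Z hZ
        rw [Function.update_apply]
        by_cases hZY : Z = Y
        · rw [if_pos hZY]
        · rw [if_neg hZY]
          exact le_trans (hγ Z (by simp [ufv]; exact ⟨hZ, hZY⟩)) hkK
      rcases subneg_mu_inv hsub with ⟨hb, he⟩ | h0
      · intro p hp
        rw [he] at hp
        have hmK : m = K := by rw [DForm.mu.injEq] at he; exact he.2.1
        simp only [dfvD, Set.mem_diff] at hp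
        obtain ⟨h1, h2⟩ := bl_fv ψ₀ true K (Function.update γ Y K) p hp.1
        rw [hmK, h2]; exact hγ' p.1 h1
      · exact ih true K (Function.update γ Y K) hγ' b' X m ρ h0
    cases b
    · exact key (k+1) (Nat.le_succ k) (by simpa [bl] using h)
    · exact key k le_rfl (by simpa [bl] using h)

lemma bl_erase (ψ : UForm α χ) : ∀ (b : Bool) (k : ℕ) (γ : χ → ℕ),
    eraseD (bl ψ b k γ) = ψ := by
  induction ψ with
  | ff => intro b k γ; rfl
  | var Y => intro b k γ; rfl
  | or ψ₁ ψ₂ ih₁ ih₂ => intro b k γ; simp [bl, eraseD, ih₁, ih₂]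
  | neg ψ₀ ih => intro b k γ; simp [bl, eraseD, ih]
  | dia a ψ₀ ih => intro b k γ; simp [bl, eraseD, ih]
  | mu Y ψ₀ ih => intro b k γ; cases b <;> simp [bl, eraseD, ih]

end BLMain2

/-- The block-labelling `bl(φ, tt, 0, γ)` of a closed unlabelled formula in
disjunctive form with distinct bound variables is well-formed, and erasing its
block labels yields `φ` back. -/
theorem bl_wellFormed {α χ : Type} [DecidableEq χ] (φ : UForm α χ)
    (hclosed : ufv φ = ∅) (hdb : (ubinderNames φ).Nodup) (γ : χ → ℕ) :
    (∀ X k k', VarOcc (bl φ true 0 γ) X k → VarOcc (bl φ true 0 γ) X k' → k = k') ∧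
    (∀ (b : Bool) (X : χ) (k : ℕ) (ψ : DForm α χ),
      SubNeg (bl φ true 0 γ) b (DForm.mu X k ψ) → (Even k ↔ b = true)) ∧
    (∀ (X : χ) (k : ℕ) (ψ : DForm α χ),
      Subf (bl φ true 0 γ) (DForm.mu X k ψ) →
        ∀ p ∈ dfvD (DForm.mu X k ψ), p.2 ≤ k) ∧
    eraseD (bl φ true 0 γ) = φ := by
  have hfv : ∀ X ∈ ufv φ, X ∉ ubinderNames φ := by
    intro X hX
    rw [hclosed] at hX
    exact absurd hX (Set.notMem_empty X)
  refine ⟨bl_unique φ true 0 γ hdb hfv, ?_, ?_, bl_erase φ true 0 γ⟩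
  · intro b X k ψ h
    exact bl_parity φ true 0 γ true (by simp) b X k ψ h
  · rintro X k ψ ⟨b, h⟩ p hp
    refine bl_fv_le φ true 0 γ ?_ b X k ψ h p hp
    intro Y hY
    rw [hclosed] at hY
    exact absurd hY (Set.notMem_empty Y)
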